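/- Let ξ be a quadratic irrational over ℚ(i) with Hurwitz continued fraction ξ = [a₀; a₁, a₂, …]. If |ξ| > 1, the conjugate η of ξ over ℚ(i) lies in F = {w : -1/2 ≤ Re(w), Im(w) < 1/2}, and |a_n| ≥ √8 for every n ≥ 0, then the Hurwitz continued fraction of ξ is purely periodic. -/

import Mathlib

open Complex Filter

/-- `z` is a Gaussian integer (as a complex number). -/
def IsGaussianInt (z : ℂ) : Prop := ∃ m n : ℤ, z = (m : ℂ) + (n : ℂ) * I

/-- `z` belongs to `ℚ(i)`. -/
def IsGaussianRational (z : ℂ) : Prop :=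
  ∃ p q : ℂ, IsGaussianInt p ∧ IsGaussianInt q ∧ q ≠ 0 ∧ z = p / q

/-- The fundamental domain `𝔉`. -/
def InFund (z : ℂ) : Prop :=
  -(1/2) ≤ z.re ∧ z.re < 1/2 ∧ -(1/2) ≤ z.im ∧ z.im < 1/2

/-- Nearest Gaussian integer. -/
noncomputable def nearGauss (z : ℂ) : ℂ :=
  (⌊z.re + 1/2⌋ : ℤ) + (⌊z.im + 1/2⌋ : ℤ) * I

noncomputable abbrev Complex.abs : AbsoluteValue ℂ ℝ := NormedField.toAbsoluteValue ℂ

lemma Complex.sq_abs (z : ℂ) : Complex.abs z ^ 2 = normSq z := Complex.sq_norm z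

lemma Complex.abs_re_le_abs (z : ℂ) : |z.re| ≤ Complex.abs z := Complex.abs_re_le_norm z

lemma Complex.abs_im_le_abs (z : ℂ) : |z.im| ≤ Complex.abs z := Complex.abs_im_le_norm z

-- basic gaussian int lemmas
lemma gi_re_im {z : ℂ} (h : IsGaussianInt z) : ∃ m n : ℤ, z.re = (m:ℝ) ∧ z.im = (n:ℝ) := by
  obtain ⟨m, n, rfl⟩ := h
  exact ⟨m, n, by simp, by simp⟩

lemma gi_zero : IsGaussianInt 0 := ⟨0, 0, by simp⟩
lemma gi_one : IsGaussianInt 1 := ⟨1, 0, by simp⟩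

lemma gi_add {z w : ℂ} (hz : IsGaussianInt z) (hw : IsGaussianInt w) : IsGaussianInt (z + w) := by
  obtain ⟨a, b, rfl⟩ := hz; obtain ⟨c, d, rfl⟩ := hw
  exact ⟨a + c, b + d, by push_cast; ring⟩

lemma gi_neg {z : ℂ} (hz : IsGaussianInt z) : IsGaussianInt (-z) := by
  obtain ⟨a, b, rfl⟩ := hz
  exact ⟨-a, -b, by push_cast; ring⟩

lemma gi_sub {z w : ℂ} (hz : IsGaussianInt z) (hw : IsGaussianInt w) : IsGaussianInt (z - w) := by
  simpa [sub_eq_add_neg] using gi_add hz (gi_neg hw)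

lemma gi_mul {z w : ℂ} (hz : IsGaussianInt z) (hw : IsGaussianInt w) : IsGaussianInt (z * w) := by
  obtain ⟨a, b, rfl⟩ := hz; obtain ⟨c, d, rfl⟩ := hw
  exact ⟨a * c - b * d, a * d + b * c, by push_cast; ring_nf; simp [Complex.I_sq]; ring⟩

lemma gi_eq_zero_of_small {z : ℂ} (hz : IsGaussianInt z) (h1 : |z.re| < 1) (h2 : |z.im| < 1) :
    z = 0 := by
  obtain ⟨m, n, hm, hn⟩ := gi_re_im hz
  have hm0 : m = 0 := by
    have h : |(m:ℝ)| < 1 := by rwa [hm] at h1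
    have : ((|m| : ℤ) : ℝ) < 1 := by push_cast; exact h
    have : |m| < 1 := by exact_mod_cast this
    exact Int.abs_lt_one_iff.mp this
  have hn0 : n = 0 := by
    have h : |(n:ℝ)| < 1 := by rwa [hn] at h2
    have : ((|n| : ℤ) : ℝ) < 1 := by push_cast; exact h
    have : |n| < 1 := by exact_mod_cast this
    exact Int.abs_lt_one_iff.mp this
  exact Complex.ext (by simp [hm, hm0]) (by simp [hn, hn0])

lemma gi_one_le_abs {z : ℂ} (hz : IsGaussianInt z) (h0 : z ≠ 0) : 1 ≤ Complex.abs z := by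
  obtain ⟨m, n, hm, hn⟩ := gi_re_im hz
  have habs : (Complex.abs z)^2 = (m:ℝ)^2 + (n:ℝ)^2 := by
    rw [Complex.sq_abs, Complex.normSq_apply, hm, hn]; ring
  have hmn : m ≠ 0 ∨ n ≠ 0 := by
    by_contra h
    push_neg at h
    exact h0 (Complex.ext (by simp [hm, h.1]) (by simp [hn, h.2]))
  have h1 : (1:ℝ) ≤ (m:ℝ)^2 + (n:ℝ)^2 := by
    rcases hmn with h | h
    · have h1 : (1:ℝ) ≤ (m:ℝ)^2 := by
        have : (1:ℤ) ≤ m^2 := by nlinarith [_root_.sq_abs m, Int.one_le_abs h, abs_nonneg m]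
        exact_mod_cast this
      nlinarith [sq_nonneg (n:ℝ)]
    · have h1 : (1:ℝ) ≤ (n:ℝ)^2 := by
        have : (1:ℤ) ≤ n^2 := by nlinarith [_root_.sq_abs n, Int.one_le_abs h, abs_nonneg n]
        exact_mod_cast this
      nlinarith [sq_nonneg (m:ℝ)]
  nlinarith [Complex.abs.nonneg z]

-- abs from squares
lemma abs_le_of_sq {z : ℂ} {r : ℝ} (hr : 0 ≤ r) (h : z.re^2 + z.im^2 ≤ r^2) :
    Complex.abs z ≤ r := by
  have h1 : (Complex.abs z)^2 = z.re^2 + z.im^2 := by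
    rw [Complex.sq_abs, Complex.normSq_apply]; ring
  nlinarith [Complex.abs.nonneg z]

-- gaussian rational closure
lemma gr_zero : IsGaussianRational 0 := ⟨0, 1, gi_zero, gi_one, one_ne_zero, by simp⟩

lemma gr_of_gi {z : ℂ} (h : IsGaussianInt z) : IsGaussianRational z :=
  ⟨z, 1, h, gi_one, one_ne_zero, by simp⟩

lemma gr_add {z w : ℂ} (hz : IsGaussianRational z) (hw : IsGaussianRational w) :
    IsGaussianRational (z + w) := by
  obtain ⟨p, q, hp, hq, hq0, rfl⟩ := hz
  obtain ⟨r, s, hr, hs, hs0, rfl⟩ := hw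
  exact ⟨p * s + r * q, q * s, gi_add (gi_mul hp hs) (gi_mul hr hq), gi_mul hq hs,
    mul_ne_zero hq0 hs0, by field_simp; try ring⟩

lemma gr_neg {z : ℂ} (hz : IsGaussianRational z) : IsGaussianRational (-z) := by
  obtain ⟨p, q, hp, hq, hq0, rfl⟩ := hz
  exact ⟨-p, q, gi_neg hp, hq, hq0, by ring⟩

lemma gr_sub {z w : ℂ} (hz : IsGaussianRational z) (hw : IsGaussianRational w) :
    IsGaussianRational (z - w) := by
  simpa [sub_eq_add_neg] using gr_add hz (gr_neg hw)

lemma gr_inv {z : ℂ} (hz : IsGaussianRational z) (h0 : z ≠ 0) : IsGaussianRational z⁻¹ := by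
  obtain ⟨p, q, hp, hq, hq0, rfl⟩ := hz
  have hp0 : p ≠ 0 := by
    intro h; rw [h] at h0; simp at h0
  exact ⟨q, p, hq, hp, hp0, inv_div p q⟩

-- nearGauss properties
lemma nearGauss_gi (z : ℂ) : IsGaussianInt (nearGauss z) := ⟨_, _, rfl⟩

lemma nearGauss_re (z : ℂ) : (z - nearGauss z).re = z.re - ⌊z.re + 1/2⌋ := by
  simp [nearGauss]

lemma nearGauss_im (z : ℂ) : (z - nearGauss z).im = z.im - ⌊z.im + 1/2⌋ := by
  simp [nearGauss]

lemma frac_bounds (x : ℝ) : -(1/2) ≤ x - ⌊x + 1/2⌋ ∧ x - ⌊x + 1/2⌋ < 1/2 := by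
  have h1 := Int.floor_le (x + 1/2)
  have h2 := Int.lt_floor_add_one (x + 1/2)
  constructor <;> linarith

lemma nearGauss_abs_le (z : ℂ) : Complex.abs (z - nearGauss z) ≤ Real.sqrt 2 / 2 := by
  have hs : Real.sqrt 2 ^ 2 = 2 := Real.sq_sqrt (by norm_num)
  apply abs_le_of_sq (by positivity)
  rw [nearGauss_re, nearGauss_im]
  have h1 := frac_bounds z.re
  have h2 := frac_bounds z.im
  nlinarith [h1.1, h1.2, h2.1, h2.2]

-- finiteness of bounded gaussian integers
lemma gauss_bounded_finite (R : ℝ) :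
    {z : ℂ | IsGaussianInt z ∧ Complex.abs z ≤ R}.Finite := by
  have : {z : ℂ | IsGaussianInt z ∧ Complex.abs z ≤ R} ⊆
      (fun p : ℤ × ℤ => ((p.1 : ℂ) + (p.2 : ℂ) * I)) ''
        (Set.Icc (-⌈R⌉) ⌈R⌉ ×ˢ Set.Icc (-⌈R⌉) ⌈R⌉) := by
    rintro z ⟨⟨m, n, rfl⟩, habs⟩
    refine ⟨(m, n), ⟨?_, ?_⟩, rfl⟩
    · have hre : ((m:ℂ) + (n:ℂ) * I).re = (m:ℝ) := by simp
      have him : ((m:ℂ) + (n:ℂ) * I).im = (n:ℝ) := by simp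
      have hsq : (Complex.abs ((m:ℂ) + (n:ℂ) * I))^2 = (m:ℝ)^2 + (n:ℝ)^2 := by
        rw [Complex.sq_abs, Complex.normSq_apply, hre, him]; ring
      have hRnn : (0:ℝ) ≤ R := le_trans (Complex.abs.nonneg _) habs
      have hm : |(m:ℝ)| ≤ R := by
        nlinarith [abs_nonneg (m:ℝ), _root_.sq_abs (m:ℝ), sq_nonneg (n:ℝ), Complex.abs.nonneg ((m:ℂ) + (n:ℂ) * I)]
      have hm' : ((|m|:ℤ):ℝ) ≤ (⌈R⌉ : ℝ) := by
        rw [Int.cast_abs]; exact le_trans hm (Int.le_ceil R)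
      have h3 : |m| ≤ ⌈R⌉ := by exact_mod_cast hm'
      simpa [Set.mem_Icc] using abs_le.mp h3
    · have hre : ((m:ℂ) + (n:ℂ) * I).re = (m:ℝ) := by simp
      have him : ((m:ℂ) + (n:ℂ) * I).im = (n:ℝ) := by simp
      have hsq : (Complex.abs ((m:ℂ) + (n:ℂ) * I))^2 = (m:ℝ)^2 + (n:ℝ)^2 := by
        rw [Complex.sq_abs, Complex.normSq_apply, hre, him]; ring
      have hRnn : (0:ℝ) ≤ R := le_trans (Complex.abs.nonneg _) habs
      have hn : |(n:ℝ)| ≤ R := by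
        nlinarith [abs_nonneg (n:ℝ), _root_.sq_abs (n:ℝ), sq_nonneg (m:ℝ), Complex.abs.nonneg ((m:ℂ) + (n:ℂ) * I)]
      have hn' : ((|n|:ℤ):ℝ) ≤ (⌈R⌉ : ℝ) := by
        rw [Int.cast_abs]; exact le_trans hn (Int.le_ceil R)
      have h3 : |n| ≤ ⌈R⌉ := by exact_mod_cast hn'
      simpa [Set.mem_Icc] using abs_le.mp h3
  exact Set.Finite.subset (Set.Finite.image _ ((Set.finite_Icc _ _).prod (Set.finite_Icc _ _))) this

/-- Complete quotients of the Hurwitz continued fraction of `z`. -/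
noncomputable def hcfZ (z : ℂ) : ℕ → ℂ
  | 0 => z
  | n + 1 => 1 / (hcfZ z n - nearGauss (hcfZ z n))

/-- Partial quotients of the Hurwitz continued fraction of `z`. -/
noncomputable def hcfA (z : ℂ) (n : ℕ) : ℂ := nearGauss (hcfZ z n)

/-- Numerators: `hcfP z (n+2) = p n`, with `p (-2) = 0`, `p (-1) = 1`. -/
noncomputable def hcfP (z : ℂ) : ℕ → ℂ
  | 0 => 0
  | 1 => 1
  | n + 2 => hcfA z n * hcfP z (n + 1) + hcfP z n

/-- Denominators: `hcfQ z (n+2) = q n`, with `q (-2) = 1`, `q (-1) = 0`. -/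
noncomputable def hcfQ (z : ℂ) : ℕ → ℂ
  | 0 => 1
  | 1 => 0
  | n + 2 => hcfA z n * hcfQ z (n + 1) + hcfQ z n

noncomputable def etaSeq (ξ η : ℂ) : ℕ → ℂ
  | 0 => η
  | n + 1 => 1 / (etaSeq ξ η n - hcfA ξ n)

lemma hcf_irr (ξ : ℂ) (h0 : ¬ IsGaussianRational ξ) :
    ∀ n, ¬ IsGaussianRational (hcfZ ξ n) := by
  intro n; induction n with
  | zero => exact h0
  | succ n ih =>
    intro hR
    have hne : hcfZ ξ n - hcfA ξ n ≠ 0 :=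
      sub_ne_zero.mpr (fun h => ih (h ▸ gr_of_gi (nearGauss_gi _)))
    have hdef : hcfZ ξ (n+1) = 1 / (hcfZ ξ n - hcfA ξ n) := rfl
    have hz : hcfZ ξ (n+1) ≠ 0 := by rw [hdef]; exact one_div_ne_zero hne
    apply ih
    have heq : hcfZ ξ n = hcfA ξ n + (hcfZ ξ (n+1))⁻¹ := by
      rw [hdef]; field_simp; ring
    rw [heq]
    exact gr_add (gr_of_gi (nearGauss_gi _)) (gr_inv hR hz)

lemma hcf_key (ξ : ℂ) (h0 : ¬ IsGaussianRational ξ) (n : ℕ) :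
    hcfZ ξ (n+1) * (hcfZ ξ n - hcfA ξ n) = 1 := by
  have hne : hcfZ ξ n - hcfA ξ n ≠ 0 :=
    sub_ne_zero.mpr (fun h => hcf_irr ξ h0 n (h ▸ gr_of_gi (nearGauss_gi _)))
  show (1 / (hcfZ ξ n - hcfA ξ n)) * (hcfZ ξ n - hcfA ξ n) = 1
  field_simp

lemma abs_add_lower (x y : ℂ) : Complex.abs x - Complex.abs y ≤ Complex.abs (x + y) := by
  have h := Complex.abs.add_le (x + y) (-y)
  simp at h
  linarith [h]

lemma hcf_det (ξ : ℂ) : ∀ n : ℕ,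
    hcfP ξ (n+1) * hcfQ ξ n - hcfP ξ n * hcfQ ξ (n+1) = (-1)^n := by
  intro n; induction n with
  | zero => simp [hcfP, hcfQ]
  | succ n ih =>
    have hP : hcfP ξ (n+2) = hcfA ξ n * hcfP ξ (n+1) + hcfP ξ n := rfl
    have hQ : hcfQ ξ (n+2) = hcfA ξ n * hcfQ ξ (n+1) + hcfQ ξ n := rfl
    rw [hP, hQ, pow_succ]
    linear_combination (-1 : ℂ) * ih

lemma hcf_PQ_gi (ξ : ℂ) : ∀ n : ℕ, IsGaussianInt (hcfP ξ n) ∧ IsGaussianInt (hcfQ ξ n) := by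
  intro n
  induction n using Nat.strong_induction_on with
  | _ n ih =>
    match n with
    | 0 => exact ⟨gi_zero, gi_one⟩
    | 1 => exact ⟨gi_one, gi_zero⟩
    | (n+2) =>
      obtain ⟨h1, h2⟩ := ih (n+1) (by omega)
      obtain ⟨h3, h4⟩ := ih n (by omega)
      exact ⟨gi_add (gi_mul (nearGauss_gi _) h1) h3, gi_add (gi_mul (nearGauss_gi _) h2) h4⟩

lemma sqrt8_eq : Real.sqrt 8 = 2 * Real.sqrt 2 := by
  rw [show (8:ℝ) = 2^2 * 2 by norm_num, Real.sqrt_mul (by positivity), Real.sqrt_sq (by norm_num)]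

lemma sqrt2_lt : Real.sqrt 2 < 3/2 := by
  nlinarith [Real.sq_sqrt (by norm_num : (2:ℝ) ≥ 0), Real.sqrt_nonneg 2]

lemma sqrt2_gt : 4/3 < Real.sqrt 2 := by
  nlinarith [Real.sq_sqrt (by norm_num : (2:ℝ) ≥ 0), Real.sqrt_nonneg 2]

lemma hcf_Q_growth (ξ : ℂ) (hbig : ∀ n : ℕ, Real.sqrt 8 ≤ Complex.abs (hcfA ξ n)) :
    ∀ n : ℕ, 1 ≤ Complex.abs (hcfQ ξ (n+2)) ∧
      2 * Complex.abs (hcfQ ξ (n+2)) ≤ Complex.abs (hcfQ ξ (n+3)) := by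
  have hs2 := sqrt2_gt
  have hbig' : ∀ n, 2 * Real.sqrt 2 ≤ Complex.abs (hcfA ξ n) := by
    intro n; rw [← sqrt8_eq]; exact hbig n
  intro n; induction n with
  | zero =>
    have hQ2 : hcfQ ξ 2 = 1 := by
      show hcfA ξ 0 * hcfQ ξ 1 + hcfQ ξ 0 = 1
      show hcfA ξ 0 * 0 + 1 = 1; ring
    have hQ3 : hcfQ ξ 3 = hcfA ξ 1 := by
      show hcfA ξ 1 * hcfQ ξ 2 + hcfQ ξ 1 = hcfA ξ 1
      rw [hQ2]; show hcfA ξ 1 * 1 + 0 = hcfA ξ 1; ring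
    constructor
    · rw [hQ2]; simp
    · rw [hQ2, hQ3]; simp
      calc (2:ℝ) ≤ 2 * Real.sqrt 2 := by nlinarith
        _ ≤ _ := hbig' 1
  | succ n ih =>
    obtain ⟨ih1, ih2⟩ := ih
    have h1 : 1 ≤ Complex.abs (hcfQ ξ (n+3)) := by linarith
    refine ⟨h1, ?_⟩
    have hQ4 : hcfQ ξ (n+4) = hcfA ξ (n+2) * hcfQ ξ (n+3) + hcfQ ξ (n+2) := rfl
    have htri := abs_add_lower (hcfA ξ (n+2) * hcfQ ξ (n+3)) (hcfQ ξ (n+2))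
    rw [← hQ4, map_mul] at htri
    have hb := hbig' (n+2)
    have hnn := Complex.abs.nonneg (hcfQ ξ (n+3))
    nlinarith [Complex.abs.nonneg (hcfQ ξ (n+2))]

lemma hcf_Q_mono (ξ : ℂ) (hbig : ∀ n : ℕ, Real.sqrt 8 ≤ Complex.abs (hcfA ξ n)) :
    ∀ n : ℕ, Complex.abs (hcfQ ξ (n+1)) ≤ Complex.abs (hcfQ ξ (n+2)) := by
  intro n
  match n with
  | 0 =>
    show Complex.abs (0 : ℂ) ≤ _
    simp [Complex.abs.nonneg]
  | (n+1) =>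
    obtain ⟨h1, h2⟩ := hcf_Q_growth ξ hbig n
    linarith

lemma abs_sub_lower (x y : ℂ) : Complex.abs x - Complex.abs y ≤ Complex.abs (x - y) := by
  have h : Complex.abs ((x - y) + y) ≤ Complex.abs (x - y) + Complex.abs y :=
    Complex.abs.add_le _ _
  rw [sub_add_cancel] at h
  linarith

lemma eta_all (ξ η : ℂ) (hbig : ∀ n : ℕ, Real.sqrt 8 ≤ Complex.abs (hcfA ξ n))
    (hη0 : Complex.abs η ≤ Real.sqrt 2 / 2) :
    ∀ n : ℕ, Complex.abs (etaSeq ξ η n) ≤ Real.sqrt 2 / 2 ∧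
      etaSeq ξ η (n+1) * (etaSeq ξ η n - hcfA ξ n) = 1 ∧
      Complex.abs (etaSeq ξ η (n+1)) ≤ Real.sqrt 2 / 3 := by
  have hs2 : Real.sqrt 2 ^ 2 = 2 := Real.sq_sqrt (by norm_num)
  have hs2n : (0:ℝ) ≤ Real.sqrt 2 := Real.sqrt_nonneg 2
  have hsgt := sqrt2_gt
  have step : ∀ n, Complex.abs (etaSeq ξ η n) ≤ Real.sqrt 2 / 2 →
      etaSeq ξ η (n+1) * (etaSeq ξ η n - hcfA ξ n) = 1 ∧
      Complex.abs (etaSeq ξ η (n+1)) ≤ Real.sqrt 2 / 3 := by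
    intro n hn
    have hb : 2 * Real.sqrt 2 ≤ Complex.abs (hcfA ξ n) := by
      rw [← sqrt8_eq]; exact hbig n
    have hlow : 3 * Real.sqrt 2 / 2 ≤ Complex.abs (etaSeq ξ η n - hcfA ξ n) := by
      have h := abs_sub_lower (hcfA ξ n) (etaSeq ξ η n)
      have h2 : Complex.abs (hcfA ξ n - etaSeq ξ η n) = Complex.abs (etaSeq ξ η n - hcfA ξ n) :=
        Complex.abs.map_sub _ _
      linarith [h2 ▸ h]
    have hpos : (0:ℝ) < Complex.abs (etaSeq ξ η n - hcfA ξ n) := by nlinarith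
    have hne : etaSeq ξ η n - hcfA ξ n ≠ 0 := by
      intro h; rw [h] at hpos; simp at hpos
    have hdef : etaSeq ξ η (n+1) = 1 / (etaSeq ξ η n - hcfA ξ n) := rfl
    have hkey : etaSeq ξ η (n+1) * (etaSeq ξ η n - hcfA ξ n) = 1 := by
      rw [hdef]; field_simp
    refine ⟨hkey, ?_⟩
    have habs : Complex.abs (etaSeq ξ η (n+1)) * Complex.abs (etaSeq ξ η n - hcfA ξ n) = 1 := by
      rw [← map_mul, hkey, map_one]
    nlinarith [Complex.abs.nonneg (etaSeq ξ η (n+1))]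
  intro n
  induction n with
  | zero =>
    have h0 : Complex.abs (etaSeq ξ η 0) ≤ Real.sqrt 2 / 2 := hη0
    exact ⟨h0, step 0 h0⟩
  | succ n ih =>
    have h1 : Complex.abs (etaSeq ξ η (n+1)) ≤ Real.sqrt 2 / 2 := by
      have := ih.2.2; nlinarith
    exact ⟨h1, step (n+1) h1⟩

lemma hcf_rel (ξ : ℂ) (W : ℕ → ℂ)
    (hKey : ∀ n, W (n+1) * (W n - hcfA ξ n) = 1) :
    ∀ n : ℕ, W 0 * (hcfQ ξ (n+2) * W (n+1) + hcfQ ξ (n+1)) =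
      hcfP ξ (n+2) * W (n+1) + hcfP ξ (n+1) := by
  intro n
  induction n with
  | zero =>
    have hQ2 : hcfQ ξ 2 = 1 := by
      show hcfA ξ 0 * hcfQ ξ 1 + hcfQ ξ 0 = 1
      show hcfA ξ 0 * 0 + 1 = 1; ring
    have hP2 : hcfP ξ 2 = hcfA ξ 0 := by
      show hcfA ξ 0 * hcfP ξ 1 + hcfP ξ 0 = hcfA ξ 0
      show hcfA ξ 0 * 1 + 0 = hcfA ξ 0; ring
    have hQ1 : hcfQ ξ 1 = 0 := rfl
    have hP1 : hcfP ξ 1 = 1 := rfl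
    rw [hQ2, hP2, hQ1, hP1]
    linear_combination hKey 0
  | succ n ih =>
    have hQ3 : hcfQ ξ (n+3) = hcfA ξ (n+1) * hcfQ ξ (n+2) + hcfQ ξ (n+1) := rfl
    have hP3 : hcfP ξ (n+3) = hcfA ξ (n+1) * hcfP ξ (n+2) + hcfP ξ (n+1) := rfl
    rw [hQ3, hP3]
    linear_combination W (n+2) * ih - (W 0 * hcfQ ξ (n+2) - hcfP ξ (n+2)) * hKey (n+1)

lemma hcf_err (ξ : ℂ) (W : ℕ → ℂ)
    (hKey : ∀ n, W (n+1) * (W n - hcfA ξ n) = 1) (n : ℕ) :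
    (hcfP ξ (n+2) - W 0 * hcfQ ξ (n+2)) * (hcfQ ξ (n+2) * W (n+1) + hcfQ ξ (n+1)) =
      (-1)^(n+1) := by
  linear_combination (-(hcfQ ξ (n+2))) * hcf_rel ξ W hKey n + hcf_det ξ (n+1)
set_option maxHeartbeats 4000000 in
/-- a quadratic irrational `ξ` over `ℚ(i)` with `|ξ| > 1`, conjugate
`η ∈ 𝔉`, and all partial quotients of absolute value at least `√8`, has purely
periodic HCF. -/
theorem purely_periodic_criterion (ξ η b c : ℂ)
    (hirr : ¬ IsGaussianRational ξ)
    (hb : IsGaussianRational b) (hc : IsGaussianRational c)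
    (hξ : ξ ^ 2 + b * ξ + c = 0) (hη : η ^ 2 + b * η + c = 0) (hne : η ≠ ξ)
    (hξabs : 1 < ‖ξ‖) (hηF : InFund η)
    (hbig : ∀ n : ℕ, Real.sqrt 8 ≤ ‖hcfA ξ n‖) :
    ∃ m : ℕ, 1 ≤ m ∧ ∀ n : ℕ, hcfA ξ (n + m) = hcfA ξ n := by
  -- numeric facts
  have hs2 : Real.sqrt 2 ^ 2 = 2 := Real.sq_sqrt (by norm_num)
  have hs2n : (0:ℝ) ≤ Real.sqrt 2 := Real.sqrt_nonneg 2
  have hsgt := sqrt2_gt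
  have hslt := sqrt2_lt
  -- eta basics
  have hη0 : Complex.abs η ≤ Real.sqrt 2 / 2 := by
    obtain ⟨h1, h2, h3, h4⟩ := hηF
    apply abs_le_of_sq (by positivity)
    nlinarith
  have etaAll := eta_all ξ η hbig hη0
  have etaKey : ∀ n, etaSeq ξ η (n+1) * (etaSeq ξ η n - hcfA ξ n) = 1 :=
    fun n => (etaAll n).2.1
  have etaBd : ∀ n, Complex.abs (etaSeq ξ η n) ≤ Real.sqrt 2 / 2 := fun n => (etaAll n).1
  have etaBd' : ∀ n, Complex.abs (etaSeq ξ η (n+1)) ≤ Real.sqrt 2 / 3 :=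
    fun n => (etaAll n).2.2
  have key : ∀ n, hcfZ ξ (n+1) * (hcfZ ξ n - hcfA ξ n) = 1 := hcf_key ξ hirr
  have relZ : ∀ n : ℕ, ξ * (hcfQ ξ (n+2) * hcfZ ξ (n+1) + hcfQ ξ (n+1)) =
      hcfP ξ (n+2) * hcfZ ξ (n+1) + hcfP ξ (n+1) := hcf_rel ξ (hcfZ ξ) key
  have relW : ∀ n : ℕ, η * (hcfQ ξ (n+2) * etaSeq ξ η (n+1) + hcfQ ξ (n+1)) =
      hcfP ξ (n+2) * etaSeq ξ η (n+1) + hcfP ξ (n+1) := hcf_rel ξ (etaSeq ξ η) etaKey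
  have errZ : ∀ n : ℕ, (hcfP ξ (n+2) - ξ * hcfQ ξ (n+2)) *
      (hcfQ ξ (n+2) * hcfZ ξ (n+1) + hcfQ ξ (n+1)) = (-1)^(n+1) :=
    hcf_err ξ (hcfZ ξ) key
  have errW : ∀ n : ℕ, (hcfP ξ (n+2) - η * hcfQ ξ (n+2)) *
      (hcfQ ξ (n+2) * etaSeq ξ η (n+1) + hcfQ ξ (n+1)) = (-1)^(n+1) :=
    hcf_err ξ (etaSeq ξ η) etaKey
  -- lower bounds on |Z n|
  have hZlow : ∀ n, 3 * Real.sqrt 2 / 2 ≤ Complex.abs (hcfZ ξ n) := by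
    intro n
    have hb2 : 2 * Real.sqrt 2 ≤ Complex.abs (hcfA ξ n) := by
      rw [← sqrt8_eq]; exact hbig n
    have htri : Complex.abs (hcfA ξ n) ≤ Complex.abs (hcfZ ξ n) +
        Complex.abs (hcfZ ξ n - hcfA ξ n) := by
      have h := Complex.abs.add_le (hcfZ ξ n) (hcfA ξ n - hcfZ ξ n)
      simp at h
      calc Complex.abs (hcfA ξ n) ≤ _ := h
        _ = _ := by rw [Complex.abs.map_sub]
    have hng := nearGauss_abs_le (hcfZ ξ n)
    have : Complex.abs (hcfZ ξ n - hcfA ξ n) ≤ Real.sqrt 2 / 2 := hng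
    linarith
  -- coefficients
  obtain ⟨pb, qb, hpb, hqb, hqb0, hbEq⟩ := hb
  obtain ⟨pc, qc, hpc, hqc, hqc0, hcEq⟩ := hc
  set A : ℂ := qb * qc with hA
  set B : ℂ := pb * qc with hB
  set C : ℂ := qb * pc with hC
  have hA0 : A ≠ 0 := mul_ne_zero hqb0 hqc0
  have hAgi : IsGaussianInt A := gi_mul hqb hqc
  have hBgi : IsGaussianInt B := gi_mul hpb hqc
  have hCgi : IsGaussianInt C := gi_mul hqb hpc
  have hAξ : A * ξ^2 + B * ξ + C = 0 := by
    rw [hbEq, hcEq] at hξ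
    field_simp at hξ
    linear_combination hξ
  have hAη : A * η^2 + B * η + C = 0 := by
    rw [hbEq, hcEq] at hη
    field_simp at hη
    linear_combination hη
  have hsum : A * (ξ + η) + B = 0 := by
    have hδ : ξ - η ≠ 0 := sub_ne_zero.mpr (fun h => hne h.symm)
    have h2 : (ξ - η) * (A * (ξ + η) + B) = 0 := by linear_combination hAξ - hAη
    rcases mul_eq_zero.mp h2 with h | h
    · exact absurd h hδ
    · exact h
  have hprod : A * (ξ * η) - C = 0 := by
    linear_combination (-1 : ℂ) * hAξ + ξ * hsum
  -- error term bounds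
  have uZbig : ∀ n, Complex.abs (hcfQ ξ (n+2)) ≤
      Complex.abs (hcfQ ξ (n+2) * hcfZ ξ (n+1) + hcfQ ξ (n+1)) := by
    intro n
    have h1 := abs_add_lower (hcfQ ξ (n+2) * hcfZ ξ (n+1)) (hcfQ ξ (n+1))
    rw [map_mul] at h1
    have h2 := hZlow (n+1)
    have h3 := hcf_Q_mono ξ hbig n
    have h4 := (hcf_Q_growth ξ hbig n).1
    have hqn := Complex.abs.nonneg (hcfQ ξ (n+2))
    have h5 : Complex.abs (hcfQ ξ (n+2)) * (3 * Real.sqrt 2 / 2) ≤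
        Complex.abs (hcfQ ξ (n+2)) * Complex.abs (hcfZ ξ (n+1)) :=
      mul_le_mul_of_nonneg_left h2 hqn
    nlinarith
  have errZabs : ∀ n, Complex.abs (hcfP ξ (n+2) - ξ * hcfQ ξ (n+2)) *
      Complex.abs (hcfQ ξ (n+2) * hcfZ ξ (n+1) + hcfQ ξ (n+1)) = 1 := by
    intro n
    rw [← map_mul, errZ n, map_pow]
    simp
  have errWabs : ∀ n, Complex.abs (hcfP ξ (n+2) - η * hcfQ ξ (n+2)) *
      Complex.abs (hcfQ ξ (n+2) * etaSeq ξ η (n+1) + hcfQ ξ (n+1)) = 1 := by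
    intro n
    rw [← map_mul, errW n, map_pow]
    simp
  have errZ_ne : ∀ n, hcfP ξ (n+2) - ξ * hcfQ ξ (n+2) ≠ 0 := by
    intro n h
    have := errZ n
    rw [h, zero_mul] at this
    exact (pow_ne_zero (n+1) (by norm_num : (-1:ℂ) ≠ 0)) this.symm
  have errW_ne : ∀ n, hcfP ξ (n+2) - η * hcfQ ξ (n+2) ≠ 0 := by
    intro n h
    have := errW n
    rw [h, zero_mul] at this
    exact (pow_ne_zero (n+1) (by norm_num : (-1:ℂ) ≠ 0)) this.symm
  have errZsmall : ∀ n, Complex.abs (hcfP ξ (n+2) - ξ * hcfQ ξ (n+2)) ≤ 1 ∧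
      Complex.abs (hcfP ξ (n+2) - ξ * hcfQ ξ (n+2)) * Complex.abs (hcfQ ξ (n+2)) ≤ 1 := by
    intro n
    have h1 := errZabs n
    have h2 := uZbig n
    have h3 := (hcf_Q_growth ξ hbig n).1
    have he := Complex.abs.nonneg (hcfP ξ (n+2) - ξ * hcfQ ξ (n+2))
    constructor
    · nlinarith
    · nlinarith
  -- transformed coefficients
  set cA : ℕ → ℂ := fun n => A * hcfP ξ (n+2)^2 + B * hcfP ξ (n+2) * hcfQ ξ (n+2) +
    C * hcfQ ξ (n+2)^2 with hcAdef
  set cB : ℕ → ℂ := fun n => 2*A*(hcfP ξ (n+2))*(hcfP ξ (n+1)) +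
    B*((hcfP ξ (n+2))*(hcfQ ξ (n+1)) + (hcfP ξ (n+1))*(hcfQ ξ (n+2))) +
    2*C*(hcfQ ξ (n+2))*(hcfQ ξ (n+1)) with hcBdef
  set cC : ℕ → ℂ := fun n => A * hcfP ξ (n+1)^2 + B * hcfP ξ (n+1) * hcfQ ξ (n+1) +
    C * hcfQ ξ (n+1)^2 with hcCdef
  have hcA : ∀ n, cA n = A * hcfP ξ (n+2)^2 + B * hcfP ξ (n+2) * hcfQ ξ (n+2) +
    C * hcfQ ξ (n+2)^2 := fun n => rfl
  have hcB : ∀ n, cB n = 2*A*(hcfP ξ (n+2))*(hcfP ξ (n+1)) +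
    B*((hcfP ξ (n+2))*(hcfQ ξ (n+1)) + (hcfP ξ (n+1))*(hcfQ ξ (n+2))) +
    2*C*(hcfQ ξ (n+2))*(hcfQ ξ (n+1)) := fun n => rfl
  have hcC : ∀ n, cC n = A * hcfP ξ (n+1)^2 + B * hcfP ξ (n+1) * hcfQ ξ (n+1) +
    C * hcfQ ξ (n+1)^2 := fun n => rfl
  have fact1 : ∀ n, cA n = A * (hcfP ξ (n+2) - ξ * hcfQ ξ (n+2)) *
      (hcfP ξ (n+2) - η * hcfQ ξ (n+2)) := by
    intro n
    rw [hcA n]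
    linear_combination (hcfP ξ (n+2) * hcfQ ξ (n+2)) * hsum - (hcfQ ξ (n+2))^2 * hprod
  have cA_ne : ∀ n, cA n ≠ 0 := by
    intro n
    rw [fact1 n]
    exact mul_ne_zero (mul_ne_zero hA0 (errZ_ne n)) (errW_ne n)
  have cA_gi : ∀ n, IsGaussianInt (cA n) := by
    intro n
    rw [hcA n]
    simp only [pow_two]
    obtain ⟨hP2, hQ2⟩ := hcf_PQ_gi ξ (n+2)
    exact gi_add (gi_add (gi_mul hAgi (gi_mul hP2 hP2)) (gi_mul (gi_mul hBgi hP2) hQ2))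
      (gi_mul hCgi (gi_mul hQ2 hQ2))
  have cB_gi : ∀ n, IsGaussianInt (cB n) := by
    intro n
    rw [hcB n]
    obtain ⟨hP2, hQ2⟩ := hcf_PQ_gi ξ (n+2)
    obtain ⟨hP1, hQ1⟩ := hcf_PQ_gi ξ (n+1)
    have h2 : IsGaussianInt (2 : ℂ) := ⟨2, 0, by norm_num⟩
    exact gi_add (gi_add (gi_mul (gi_mul (gi_mul h2 hAgi) hP2) hP1)
      (gi_mul hBgi (gi_add (gi_mul hP2 hQ1) (gi_mul hP1 hQ2))))
      (gi_mul (gi_mul (gi_mul h2 hCgi) hQ2) hQ1)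
  have cA_bd : ∀ n, Complex.abs (cA n) ≤ Complex.abs A * (1 + Complex.abs (ξ - η)) := by
    intro n
    rw [fact1 n, map_mul, map_mul]
    have hf : hcfP ξ (n+2) - η * hcfQ ξ (n+2) =
        (hcfP ξ (n+2) - ξ * hcfQ ξ (n+2)) + (ξ - η) * hcfQ ξ (n+2) := by ring
    have htri : Complex.abs (hcfP ξ (n+2) - η * hcfQ ξ (n+2)) ≤
        Complex.abs (hcfP ξ (n+2) - ξ * hcfQ ξ (n+2)) +
        Complex.abs (ξ - η) * Complex.abs (hcfQ ξ (n+2)) := by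
      rw [hf]
      calc _ ≤ _ := Complex.abs.add_le _ _
        _ = _ := by rw [map_mul]
    obtain ⟨hs1, hs2'⟩ := errZsmall n
    have ha := Complex.abs.nonneg A
    have he := Complex.abs.nonneg (hcfP ξ (n+2) - ξ * hcfQ ξ (n+2))
    have hd := Complex.abs.nonneg (ξ - η)
    have hq := Complex.abs.nonneg (hcfQ ξ (n+2))
    have hmul : Complex.abs (ξ - η) * (Complex.abs (hcfP ξ (n+2) - ξ * hcfQ ξ (n+2)) *
        Complex.abs (hcfQ ξ (n+2))) ≤ Complex.abs (ξ - η) * 1 :=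
      mul_le_mul_of_nonneg_left hs2' hd
    have h6 : Complex.abs (hcfP ξ (n+2) - ξ * hcfQ ξ (n+2)) *
        Complex.abs (hcfP ξ (n+2) - η * hcfQ ξ (n+2)) ≤ 1 + Complex.abs (ξ - η) := by
      nlinarith [mul_le_mul_of_nonneg_left htri he]
    calc Complex.abs A * Complex.abs (hcfP ξ (n+2) - ξ * hcfQ ξ (n+2)) *
        Complex.abs (hcfP ξ (n+2) - η * hcfQ ξ (n+2))
        = Complex.abs A * (Complex.abs (hcfP ξ (n+2) - ξ * hcfQ ξ (n+2)) *
          Complex.abs (hcfP ξ (n+2) - η * hcfQ ξ (n+2))) := by ring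
      _ ≤ Complex.abs A * (1 + Complex.abs (ξ - η)) := mul_le_mul_of_nonneg_left h6 ha
  have quadZ : ∀ n, cA n * hcfZ ξ (n+1)^2 + cB n * hcfZ ξ (n+1) + cC n = 0 := by
    intro n
    rw [hcA n, hcB n, hcC n]
    linear_combination (-(A*(hcfP ξ (n+2)*hcfZ ξ (n+1) + hcfP ξ (n+1) +
      ξ*(hcfQ ξ (n+2)*hcfZ ξ (n+1)+hcfQ ξ (n+1))) +
      B*(hcfQ ξ (n+2)*hcfZ ξ (n+1)+hcfQ ξ (n+1)))) * relZ n +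
      (hcfQ ξ (n+2)*hcfZ ξ (n+1)+hcfQ ξ (n+1))^2 * hAξ
  have quadW : ∀ n, cA n * etaSeq ξ η (n+1)^2 + cB n * etaSeq ξ η (n+1) + cC n = 0 := by
    intro n
    rw [hcA n, hcB n, hcC n]
    linear_combination (-(A*(hcfP ξ (n+2)*etaSeq ξ η (n+1) + hcfP ξ (n+1) +
      η*(hcfQ ξ (n+2)*etaSeq ξ η (n+1)+hcfQ ξ (n+1))) +
      B*(hcfQ ξ (n+2)*etaSeq ξ η (n+1)+hcfQ ξ (n+1)))) * relW n +
      (hcfQ ξ (n+2)*etaSeq ξ η (n+1)+hcfQ ξ (n+1))^2 * hAη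
  have ZneW : ∀ n, hcfZ ξ (n+1) ≠ etaSeq ξ η (n+1) := by
    intro n h
    have h1 := hZlow (n+1)
    have h2 := etaBd (n+1)
    rw [h] at h1
    nlinarith
  have vsum : ∀ n, cA n * (hcfZ ξ (n+1) + etaSeq ξ η (n+1)) + cB n = 0 := by
    intro n
    have h2 : (hcfZ ξ (n+1) - etaSeq ξ η (n+1)) *
        (cA n * (hcfZ ξ (n+1) + etaSeq ξ η (n+1)) + cB n) = 0 := by
      linear_combination quadZ n - quadW n
    rcases mul_eq_zero.mp h2 with h | h
    · exact absurd h (sub_ne_zero.mpr (ZneW n))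
    · exact h
  have vprod : ∀ n, cA n * (hcfZ ξ (n+1) * etaSeq ξ η (n+1)) - cC n = 0 := by
    intro n
    linear_combination (-1 : ℂ) * quadZ n + hcfZ ξ (n+1) * vsum n
  have disc : ∀ n, cB n ^ 2 - 4 * cA n * cC n = B^2 - 4*A*C := by
    intro n
    have hdet := hcf_det ξ (n+1)
    have hsq : ((-1:ℂ))^(n+1) * ((-1:ℂ))^(n+1) = 1 := by
      rw [← mul_pow]; norm_num
    rw [hcA n, hcB n, hcC n]
    linear_combination ((B^2 - 4*A*C) * (hcfP ξ (n+2)*hcfQ ξ (n+1) -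
      hcfP ξ (n+1)*hcfQ ξ (n+2) + (-1)^(n+1))) * hdet + (B^2 - 4*A*C) * hsq
  -- difference of roots bounded by sqrt |D|
  have hZW : ∀ n, cA n ^ 2 * (hcfZ ξ (n+1) - etaSeq ξ η (n+1))^2 = B^2 - 4*A*C := by
    intro n
    linear_combination (cA n * (hcfZ ξ (n+1) + etaSeq ξ η (n+1)) - cB n) * vsum n
      - 4 * cA n * vprod n + disc n
  have sD_def : Real.sqrt (Complex.abs (B^2 - 4*A*C)) ^ 2 = Complex.abs (B^2 - 4*A*C) :=
    Real.sq_sqrt (Complex.abs.nonneg _)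
  have ZWbound : ∀ n, Complex.abs (hcfZ ξ (n+1) - etaSeq ξ η (n+1)) ≤
      Real.sqrt (Complex.abs (B^2 - 4*A*C)) := by
    intro n
    have h1 : Complex.abs (cA n) ^ 2 * Complex.abs (hcfZ ξ (n+1) - etaSeq ξ η (n+1)) ^ 2 =
        Complex.abs (B^2 - 4*A*C) := by
      rw [← map_pow, ← map_pow, ← map_mul, hZW n]
    have h2 : 1 ≤ Complex.abs (cA n) := gi_one_le_abs (cA_gi n) (cA_ne n)
    have h3 := Complex.abs.nonneg (hcfZ ξ (n+1) - etaSeq ξ η (n+1))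
    have h4 := Real.sqrt_nonneg (Complex.abs (B^2 - 4*A*C))
    have h2' : 1 ≤ Complex.abs (cA n)^2 := by nlinarith
    have h6 := mul_le_mul_of_nonneg_right h2'
      (sq_nonneg (Complex.abs (hcfZ ξ (n+1) - etaSeq ξ η (n+1))))
    have h5 : Complex.abs (hcfZ ξ (n+1) - etaSeq ξ η (n+1)) ^ 2 ≤
        Real.sqrt (Complex.abs (B^2 - 4*A*C)) ^ 2 := by
      rw [sD_def]
      nlinarith [h6]
    nlinarith [h5]
  have cB_bd : ∀ n, Complex.abs (cB n) ≤ (Complex.abs A * (1 + Complex.abs (ξ - η))) *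
      (2 + Real.sqrt (Complex.abs (B^2 - 4*A*C))) := by
    intro n
    have hcBeq : cB n = - (cA n * (hcfZ ξ (n+1) + etaSeq ξ η (n+1))) := by
      linear_combination vsum n
    rw [hcBeq, map_neg_eq_map, map_mul]
    have h1 : Complex.abs (hcfZ ξ (n+1) + etaSeq ξ η (n+1)) ≤
        2 + Real.sqrt (Complex.abs (B^2 - 4*A*C)) := by
      have he : hcfZ ξ (n+1) + etaSeq ξ η (n+1) =
          (hcfZ ξ (n+1) - etaSeq ξ η (n+1)) + 2 * etaSeq ξ η (n+1) := by ring
      have htri : Complex.abs (hcfZ ξ (n+1) + etaSeq ξ η (n+1)) ≤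
          Complex.abs (hcfZ ξ (n+1) - etaSeq ξ η (n+1)) +
          Complex.abs 2 * Complex.abs (etaSeq ξ η (n+1)) := by
        rw [he]
        calc _ ≤ _ := Complex.abs.add_le _ _
          _ = _ := by rw [map_mul]
      have h2 : Complex.abs (2:ℂ) = 2 := by show ‖(2:ℂ)‖ = 2; norm_num
      have h3 := etaBd (n+1)
      have h4 := ZWbound n
      rw [h2] at htri
      nlinarith
    have h5 : 0 ≤ Complex.abs (cA n) := Complex.abs.nonneg _
    have h6 := cA_bd n
    have h7 : (0:ℝ) ≤ 2 + Real.sqrt (Complex.abs (B^2 - 4*A*C)) := by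
      have := Real.sqrt_nonneg (Complex.abs (B^2 - 4*A*C)); linarith
    calc Complex.abs (cA n) * Complex.abs (hcfZ ξ (n+1) + etaSeq ξ η (n+1))
        ≤ Complex.abs (cA n) * (2 + Real.sqrt (Complex.abs (B^2 - 4*A*C))) :=
          mul_le_mul_of_nonneg_left h1 h5
      _ ≤ _ := mul_le_mul_of_nonneg_right h6 h7
  -- the key recurrence-equality step (backward determinism)
  have hW1ne : ∀ t, etaSeq ξ η (t+1) ≠ 0 := by
    intro t h
    have hk := etaKey t
    rw [h, zero_mul] at hk
    norm_num at hk
  have hZ1ne : ∀ t, hcfZ ξ (t+1) ≠ 0 := by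
    intro t h
    have hk := key t
    rw [h, zero_mul] at hk
    norm_num at hk
  have box : ∀ t, -(1/2) ≤ (etaSeq ξ η t).re ∧ (etaSeq ξ η t).re < 1/2 ∧
      -(1/2) ≤ (etaSeq ξ η t).im ∧ (etaSeq ξ η t).im < 1/2 := by
    intro t
    rcases t with _ | t
    · exact hηF
    · have h1 := etaBd' t
      have h2 := Complex.abs_re_le_abs (etaSeq ξ η (t+1))
      have h3 := Complex.abs_im_le_abs (etaSeq ξ η (t+1))
      have h4 := neg_abs_le (etaSeq ξ η (t+1)).re
      have h5 := neg_abs_le (etaSeq ξ η (t+1)).im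
      have h6 := le_abs_self (etaSeq ξ η (t+1)).re
      have h7 := le_abs_self (etaSeq ξ η (t+1)).im
      refine ⟨by linarith, by linarith, by linarith, by linarith⟩
  have back : ∀ r s : ℕ, hcfZ ξ (r+1) = hcfZ ξ (s+1) → etaSeq ξ η (r+1) = etaSeq ξ η (s+1) →
      hcfZ ξ r = hcfZ ξ s ∧ etaSeq ξ η r = etaSeq ξ η s := by
    intro r s hZe hWe
    have hWr : etaSeq ξ η r = hcfA ξ r + (etaSeq ξ η (r+1))⁻¹ := by
      have hinv : (etaSeq ξ η (r+1))⁻¹ = etaSeq ξ η r - hcfA ξ r :=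
        inv_eq_of_mul_eq_one_right (etaKey r)
      rw [hinv]; ring
    have hWs : etaSeq ξ η s = hcfA ξ s + (etaSeq ξ η (s+1))⁻¹ := by
      have hinv : (etaSeq ξ η (s+1))⁻¹ = etaSeq ξ η s - hcfA ξ s :=
        inv_eq_of_mul_eq_one_right (etaKey s)
      rw [hinv]; ring
    have hd : hcfA ξ r - hcfA ξ s = etaSeq ξ η r - etaSeq ξ η s := by
      rw [hWr, hWs, hWe]; ring
    have haeq : hcfA ξ r = hcfA ξ s := by
      have hgi : IsGaussianInt (hcfA ξ r - hcfA ξ s) :=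
        gi_sub (nearGauss_gi _) (nearGauss_gi _)
      have hre : |(hcfA ξ r - hcfA ξ s).re| < 1 := by
        have h1 := (box r).1; have h2 := (box r).2.1
        have h3 := (box s).1; have h4 := (box s).2.1
        rw [hd]
        rw [Complex.sub_re]
        rw [abs_lt]
        constructor <;> nlinarith
      have him : |(hcfA ξ r - hcfA ξ s).im| < 1 := by
        have h1 := (box r).2.2.1; have h2 := (box r).2.2.2
        have h3 := (box s).2.2.1; have h4 := (box s).2.2.2
        rw [hd]
        rw [Complex.sub_im]
        rw [abs_lt]
        constructor <;> nlinarith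
      have := gi_eq_zero_of_small hgi hre him
      exact sub_eq_zero.mp this
    constructor
    · have hir : (hcfZ ξ (r+1))⁻¹ = hcfZ ξ r - hcfA ξ r :=
        inv_eq_of_mul_eq_one_right (key r)
      have his : (hcfZ ξ (s+1))⁻¹ = hcfZ ξ s - hcfA ξ s :=
        inv_eq_of_mul_eq_one_right (key s)
      have : hcfZ ξ r - hcfA ξ r = hcfZ ξ s - hcfA ξ s := by
        rw [← hir, ← his, hZe]
      linear_combination this + haeq
    · have : etaSeq ξ η r - hcfA ξ r = etaSeq ξ η s - hcfA ξ s := by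
        have hir : (etaSeq ξ η (r+1))⁻¹ = etaSeq ξ η r - hcfA ξ r :=
          inv_eq_of_mul_eq_one_right (etaKey r)
        have his : (etaSeq ξ η (s+1))⁻¹ = etaSeq ξ η s - hcfA ξ s :=
          inv_eq_of_mul_eq_one_right (etaKey s)
        rw [← hir, ← his, hWe]
      linear_combination this + haeq
  -- the main pigeonhole consequence
  have main : ∀ m n : ℕ, m < n → cA m = cA n → cB m = cB n →
      ∃ per : ℕ, 1 ≤ per ∧ ∀ k : ℕ, hcfA ξ (k + per) = hcfA ξ k := by
    intro m n hlt hAeq hBeq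
    have hCeq : cC m = cC n := by
      have h5 : (4 * cA m) * cC m = (4 * cA m) * cC n := by
        linear_combination (cB m + cB n) * hBeq - (4 * cC n) * hAeq - disc m + disc n
      exact mul_left_cancel₀ (mul_ne_zero (by norm_num) (cA_ne m)) h5
    have hquadZn : cA m * hcfZ ξ (n+1)^2 + cB m * hcfZ ξ (n+1) + cC m = 0 := by
      rw [hAeq, hBeq, hCeq]; exact quadZ n
    have hquadWn : cA m * etaSeq ξ η (n+1)^2 + cB m * etaSeq ξ η (n+1) + cC m = 0 := by
      rw [hAeq, hBeq, hCeq]; exact quadW n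
    have hfacZ : cA m * ((hcfZ ξ (n+1) - hcfZ ξ (m+1)) * (hcfZ ξ (n+1) - etaSeq ξ η (m+1))) = 0 := by
      linear_combination hquadZn - hcfZ ξ (n+1) * vsum m + vprod m
    have hfacW : cA m * ((etaSeq ξ η (n+1) - hcfZ ξ (m+1)) * (etaSeq ξ η (n+1) - etaSeq ξ η (m+1))) = 0 := by
      linear_combination hquadWn - etaSeq ξ η (n+1) * vsum m + vprod m
    have hZZ : hcfZ ξ (n+1) = hcfZ ξ (m+1) := by
      rcases mul_eq_zero.mp hfacZ with h | h
      · exact absurd h (cA_ne m)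
      rcases mul_eq_zero.mp h with h' | h'
      · exact sub_eq_zero.mp h'
      · exfalso
        have he : hcfZ ξ (n+1) = etaSeq ξ η (m+1) := sub_eq_zero.mp h'
        have h1 := hZlow (n+1)
        have h2 := etaBd (m+1)
        rw [he] at h1
        nlinarith
    have hWW : etaSeq ξ η (n+1) = etaSeq ξ η (m+1) := by
      rcases mul_eq_zero.mp hfacW with h | h
      · exact absurd h (cA_ne m)
      rcases mul_eq_zero.mp h with h' | h'
      · exfalso
        have he : etaSeq ξ η (n+1) = hcfZ ξ (m+1) := sub_eq_zero.mp h'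
        have h1 := hZlow (m+1)
        have h2 := etaBd (n+1)
        rw [← he] at h1
        nlinarith
      · exact sub_eq_zero.mp h'
    -- descend to 0
    have desc : ∀ j, j ≤ m+1 → hcfZ ξ (m+1-j) = hcfZ ξ (n+1-j) ∧
        etaSeq ξ η (m+1-j) = etaSeq ξ η (n+1-j) := by
      intro j
      induction j with
      | zero => intro _; exact ⟨hZZ.symm, hWW.symm⟩
      | succ j ih =>
        intro hj
        obtain ⟨h1, h2⟩ := ih (by omega)
        have e1 : m+1-j = (m+1-(j+1))+1 := by omega
        have e2 : n+1-j = (n+1-(j+1))+1 := by omega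
        rw [e1, e2] at h1 h2
        exact back _ _ h1 h2
    obtain ⟨hZ0, _⟩ := desc (m+1) le_rfl
    have e3 : m+1-(m+1) = 0 := by omega
    have e4 : n+1-(m+1) = n-m := by omega
    rw [e3, e4] at hZ0
    have hper : 1 ≤ n - m := by omega
    have hshift : ∀ k, hcfZ ξ (k + (n-m)) = hcfZ ξ k := by
      intro k
      induction k with
      | zero =>
        show hcfZ ξ (0 + (n-m)) = hcfZ ξ 0
        rw [Nat.zero_add]
        exact hZ0.symm
      | succ k ih =>
        have e : k + 1 + (n-m) = (k + (n-m)) + 1 := by omega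
        rw [e]
        show 1 / (hcfZ ξ (k+(n-m)) - nearGauss (hcfZ ξ (k+(n-m)))) =  hcfZ ξ (k+1)
        rw [ih]
        rfl
    exact ⟨n - m, hper, fun k => by
      show nearGauss (hcfZ ξ (k + (n-m))) = nearGauss (hcfZ ξ k)
      rw [hshift k]⟩
  -- pigeonhole
  have hmaps : Set.MapsTo (fun n : ℕ => (cA n, cB n)) Set.univ
      (({z : ℂ | IsGaussianInt z ∧ Complex.abs z ≤ Complex.abs A * (1 + Complex.abs (ξ - η))}) ×ˢ
       ({z : ℂ | IsGaussianInt z ∧ Complex.abs z ≤ (Complex.abs A * (1 + Complex.abs (ξ - η))) *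
          (2 + Real.sqrt (Complex.abs (B^2 - 4*A*C)))})) := by
    intro n _
    exact ⟨⟨cA_gi n, cA_bd n⟩, ⟨cB_gi n, cB_bd n⟩⟩
  have hfin := (gauss_bounded_finite (Complex.abs A * (1 + Complex.abs (ξ - η)))).prod
    (gauss_bounded_finite ((Complex.abs A * (1 + Complex.abs (ξ - η))) *
      (2 + Real.sqrt (Complex.abs (B^2 - 4*A*C)))))
  obtain ⟨m, -, n, -, hmn, heq⟩ :=
    Set.infinite_univ.exists_ne_map_eq_of_mapsTo hmaps hfin
  have hAe : cA m = cA n := congrArg Prod.fst heq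
  have hBe : cB m = cB n := congrArg Prod.snd heq
  rcases lt_or_gt_of_ne hmn with h | h
  · exact main m n h hAe hBe
  · exact main n m h hAe.symm hBe.symm
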